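/- For arbitrary (non-equilibrium) driving conditions with p − τv ≠ 0, the 5×5 observability matrix O₂ of the augmented ACC system still has rank 3, with null space spanned by the vectors (0, 0, −(u−v)/(p−τv), 1, 0)ᵀ and (0, 0, αv/(p−τv), 0, 1)ᵀ. -/

import Mathlib

open Matrix

theorem acc_observability_nonequilibrium (T p v u α β τ : ℝ)
    (hT : 0 < T) (hpe : p - τ * v ≠ 0) :
    let O : Matrix (Fin 5) (Fin 5) ℝ :=
      !![1, 0, 0, 0, 0;
         1, -T, 0, 0, 0;
         1 - α*T^2, -2*T + (τ*α + β)*T^2, -(p - τ*v)*T^2, -(u - v)*T^2, α*v*T^2;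
         0, 1, 0, 0, 0;
         α*T, -α*τ*T, (p - τ*v)*T, (u - v)*T, -α*v*T]
    O.rank = 3 ∧
    LinearMap.ker O.mulVecLin =
      Submodule.span ℝ {(![0, 0, -(u - v)/(p - τ*v), 1, 0] : Fin 5 → ℝ),
                        (![0, 0, (α*v)/(p - τ*v), 0, 1] : Fin 5 → ℝ)} := by
  intro O
  set k1 : Fin 5 → ℝ := ![0, 0, -(u - v)/(p - τ*v), 1, 0] with hk1
  set k2 : Fin 5 → ℝ := ![0, 0, (α*v)/(p - τ*v), 0, 1] with hk2
  have hTne : T ≠ 0 := ne_of_gt hT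
  have hker : LinearMap.ker O.mulVecLin = Submodule.span ℝ {k1, k2} := by
    apply le_antisymm
    · intro x hx
      have hx' : O.mulVec x = 0 := hx
      have h0 := congrFun hx' 0
      have h1 := congrFun hx' 1
      have h3 := congrFun hx' 3
      have h4 := congrFun hx' 4
      simp [O, Matrix.mulVec, dotProduct, Fin.sum_univ_five] at h0 h1 h3 h4
      have hx0 : x 0 = 0 := h0
      have hx1 : x 1 = 0 := h3
      have h4' := mul_left_cancel₀ hTne (show
          T * ((p - τ*v) * x 2 + (u - v) * x 3 - α*v*x 4) = T * 0 by
        linear_combination h4 - α*T*hx0 + α*τ*T*hx1)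
      have hx2 : x 2 * (p - τ*v) = -(u - v) * x 3 + α * v * x 4 := by
        linear_combination h4'
      have hx' : x = x 3 • k1 + x 4 • k2 := by
        have hpe' : p - v * τ ≠ 0 := by intro h; apply hpe; linarith
        funext i
        fin_cases i <;>
          · simp [hk1, hk2, hx0, hx1]
            try field_simp
            try linear_combination hx2
            try ring
      rw [hx']
      exact Submodule.add_mem _
        (Submodule.smul_mem _ _ (Submodule.subset_span (Set.mem_insert _ _)))
        (Submodule.smul_mem _ _ (Submodule.subset_span (Set.mem_insert_of_mem _ rfl)))
    · rw [Submodule.span_le]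
      rintro y (rfl | rfl) <;>
      · simp only [SetLike.mem_coe, LinearMap.mem_ker]
        show O.mulVec _ = 0
        funext i
        fin_cases i <;>
          · simp [O, hk1, hk2, Matrix.mulVec, dotProduct, Fin.sum_univ_five]
            try field_simp
            try ring
  have hli : LinearIndependent ℝ ![k1, k2] := by
    rw [LinearIndependent.pair_iff]
    intro s t hst
    constructor
    · have := congrFun hst 3; simpa [hk1, hk2] using this
    · have := congrFun hst 4; simpa [hk1, hk2] using this
  have hspan : Submodule.span ℝ {k1, k2} = Submodule.span ℝ (Set.range ![k1, k2]) := by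
    congr 1
    ext y
    simp [Fin.exists_fin_two]
    tauto
  have hfr : Module.finrank ℝ (LinearMap.ker O.mulVecLin) = 2 := by
    rw [hker, hspan, finrank_span_eq_card hli]
    simp
  have hrn := LinearMap.finrank_range_add_finrank_ker O.mulVecLin
  have hrank : O.rank = 3 := by
    have : O.rank = Module.finrank ℝ (LinearMap.range O.mulVecLin) := rfl
    rw [this]
    simp [hfr] at hrn
    omega
  exact ⟨hrank, hker⟩
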